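/- arXiv:1101.2949 — 2 statements merged into one kernel-verified Lean document; each statement's English description precedes it below -/
import Mathlib

section
/- Let (B_m) be an elliptic divisibility sequence coming from a Weierstrass equation with a_1 even, p a prime, and suppose p is the smallest positive index m_0 with p | B_{m_0}. Write m = p^e · m' with p not dividing m'. If B_m is a perfect l-th power, then B_{m'} is also a perfect l-th power, and p does not divide B_{m'}. -/
open WeierstrassCurve

lemma aux_pow_of_factorization (n l : ℕ) (hn : n ≠ 0)
    (h : ∀ q : ℕ, q.Prime → l ∣ n.factorization q) : ∃ w : ℕ, n = w ^ l := by
  rcases Nat.eq_zero_or_pos l with rfl | hl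
  · refine ⟨1, ?_⟩
    have hfz : n.factorization = 0 := by
      ext q
      by_cases hq : q.Prime
      · simpa using Nat.zero_dvd.mp (h q hq)
      · simp [Nat.factorization_eq_zero_of_not_prime n hq]
    rcases (Nat.factorization_eq_zero_iff' n).mp hfz with h0 | h1
    · exact absurd h0 hn
    · simp [h1]
  · refine ⟨∏ q ∈ n.factorization.support, q ^ (n.factorization q / l), ?_⟩
    rw [← Finset.prod_pow]
    have h2 : ∀ q ∈ n.factorization.support,
        (q ^ (n.factorization q / l)) ^ l = q ^ (n.factorization q) := fun q hq => by
      rw [← pow_mul, Nat.div_mul_cancel (h q (Nat.prime_of_mem_primeFactors (by simpa using hq)))]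
    rw [Finset.prod_congr rfl h2]
    exact (Nat.factorization_prod_pow_eq_self hn).symm

/-- Let `(B m)` be an elliptic divisibility sequence coming from an integral Weierstrass
equation with `a₁` even, and `p` a prime which is the smallest positive index `m₀ = p` with
`p ∣ B m₀`.  Write `m = p ^ e * m'` with `p ∤ m'`.  If `B m` is a perfect `l`-th power then so
is `B m'`, and moreover `p ∤ B m'`.  (The divisibility and valuation properties of elliptic
divisibility sequences from Lemma 2.1 of the paper are included as hypotheses.) -/
theorem stmt_4 (W : Affine ℚ)
    (a₁ a₂ a₃ a₄ a₆ : ℤ) (ha₁ : Even a₁)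
    (hint : W.a₁ = a₁ ∧ W.a₂ = a₂ ∧ W.a₃ = a₃ ∧ W.a₄ = a₄ ∧ W.a₆ = a₆)
    (P : W.Point) (hPtor : ∀ n : ℕ, 0 < n → n • P ≠ 0)
    (A B : ℕ → ℤ) (y : ℕ → ℚ)
    (hAB : ∀ m : ℕ, 0 < m → 0 < B m ∧ Int.gcd (A m) (B m) = 1 ∧
      ∃ h : W.Nonsingular ((A m : ℚ) / (B m : ℚ) ^ 2) (y m), (m • P : W.Point) = .some _ _ h)
    (p : ℕ) (hp : p.Prime)
    (hdvd : (p : ℤ) ∣ B p) (hmin : ∀ k : ℕ, 0 < k → k < p → ¬ (p : ℤ) ∣ B k)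
    (hdiv : ∀ m : ℕ, 0 < m → ((p : ℤ) ∣ B m ↔ p ∣ m))
    (hval : ∀ q : ℕ, q.Prime → ∀ m n : ℕ, 0 < m → 0 < n → (q : ℤ) ∣ B n →
      padicValInt q (B (m * n)) = padicValInt q (B n) + padicValNat q m)
    (e : ℕ) (m m' : ℕ) (hm' : 0 < m') (hpm' : ¬ p ∣ m') (hm : m = p ^ e * m')
    (l : ℕ) (z : ℤ) (hpow : B m = z ^ l) :
    (∃ w : ℤ, B m' = w ^ l) ∧ ¬ (p : ℤ) ∣ B m' := by
  have hpB : ¬ (p : ℤ) ∣ B m' := fun h => hpm' ((hdiv m' hm').mp h)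
  refine ⟨?_, hpB⟩
  have hBm' : 0 < B m' := (hAB m' hm').1
  -- work with the natural number `n := (B m').natAbs`
  set n : ℕ := (B m').natAbs with hn
  have hn0 : n ≠ 0 := Int.natAbs_ne_zero.mpr hBm'.ne'
  have hfact : ∀ q : ℕ, q.Prime → l ∣ n.factorization q := by
    intro q hq
    by_cases hqn : q ∣ n
    · -- q divides B m'
      haveI := Fact.mk hq
      have hqB : (q : ℤ) ∣ B m' := by
        have h1 : (q : ℤ) ∣ (n : ℤ) := Int.natCast_dvd_natCast.mpr hqn
        rwa [hn, Int.natAbs_of_nonneg hBm'.le] at h1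
      have hqp : q ≠ p := by
        rintro rfl; exact hpB hqB
      have hpe : 0 < p ^ e := pow_pos hp.pos e
      have hv := hval q hq (p ^ e) m' hpe hm' hqB
      rw [← hm] at hv
      have hvp : padicValNat q (p ^ e) = 0 := by
        apply padicValNat.eq_zero_of_not_dvd
        intro hdvd'
        exact hqp ((Nat.prime_dvd_prime_iff_eq hq hp).mp (hq.dvd_of_dvd_pow hdvd'))
      rw [hvp, add_zero] at hv
      -- padicValInt q (B m) = l * padicValInt q z
      have hz0 : z ≠ 0 ∨ l = 0 := by
        rcases Nat.eq_zero_or_pos l with rfl | hl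
        · exact Or.inr rfl
        · left; intro hz; rw [hz, zero_pow hl.ne'] at hpow
          have hBm : 0 < B m := (hAB m (hm ▸ Nat.mul_pos (pow_pos hp.pos e) hm')).1
          omega
      rcases hz0 with hz0 | rfl
      · have : padicValInt q (B m) = l * padicValInt q z := by
          rw [hpow]
          unfold padicValInt
          rw [Int.natAbs_pow]
          exact padicValNat.pow _ l
        rw [this] at hv
        have : n.factorization q = padicValInt q (B m') := by
          rw [Nat.factorization_def n hq]; rfl
        rw [this, ← hv]
        exact Dvd.intro _ rfl
      · -- l = 0 : B m = 1, so padicValInt q (B m) = 0, contradiction with q ∣ B m'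
        simp only [pow_zero] at hpow
        rw [hpow] at hv
        simp only [padicValInt.one] at hv
        -- hv : 0 = padicValInt q (B m'), but q ∣ B m' and B m' ≠ 0
        exfalso
        have : q ∣ n := hqn
        have hq1 : 1 ≤ padicValNat q n :=
          one_le_padicValNat_of_dvd hn0 this
        have : padicValInt q (B m') = padicValNat q n := rfl
        omega
    · rw [Nat.factorization_eq_zero_of_not_dvd hqn]
      exact dvd_zero l
  obtain ⟨w, hw⟩ := aux_pow_of_factorization n l hn0 hfact
  refine ⟨(w : ℤ), ?_⟩
  have : (n : ℤ) = B m' := Int.natAbs_of_nonneg hBm'.le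
  rw [← this, hw]
  push_cast
  ring
end

section
/- If r is a non-negative integer and U, V, W are non-zero pairwise coprime integers with U^4 - 2^r V^4 + W^4 = 0, then r = 1 and |U| = |V| = |W| = 1. Moreover, there are no non-zero pairwise coprime integers U, V, W with 2^r U^4 - V^4 + W^4 = 0. -/
private lemma abs_pow4 (x : ℤ) : |x| ^ 4 = x ^ 4 := by
  rcases abs_cases x with ⟨h, _⟩ | ⟨h, _⟩ <;> rw [h] <;> ring

private lemma natAbs_lt_of_sq_lt {m a : ℤ} (h : m ^ 2 < a ^ 2) : m.natAbs < a.natAbs := by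
  by_contra h'
  push_neg at h'
  have h2 : |a| ≤ |m| := by
    rw [Int.abs_eq_natAbs, Int.abs_eq_natAbs]
    exact_mod_cast h'
  have h3 : a ^ 2 ≤ m ^ 2 := by
    have := pow_le_pow_left₀ (abs_nonneg a) h2 2
    rwa [sq_abs, sq_abs] at this
  linarith

private lemma odd_pow4 {a : ℤ} (h : Odd a) : ∃ k, a ^ 4 = 16 * k + 1 := by
  obtain ⟨t, rfl⟩ := h
  obtain ⟨e, he⟩ := Int.even_mul_succ_self t
  exact ⟨t ^ 4 + 2 * t ^ 3 + t ^ 2 + e, by linear_combination (8 : ℤ) * he⟩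

private lemma even_pow4 {a : ℤ} (h : Even a) : ∃ k, a ^ 4 = 16 * k := by
  obtain ⟨t, rfl⟩ := h
  exact ⟨t ^ 4, by ring⟩

private lemma odd_sq {a : ℤ} (h : Odd a) : ∃ k, a ^ 2 = 8 * k + 1 := by
  obtain ⟨t, rfl⟩ := h
  obtain ⟨e, he⟩ := Int.even_mul_succ_self t
  exact ⟨e, by linear_combination (4 : ℤ) * he⟩

private lemma sq_mod8 (c : ℤ) : ∃ j, c ^ 2 = 8 * j ∨ c ^ 2 = 8 * j + 1 ∨ c ^ 2 = 8 * j + 4 := by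
  rcases Int.even_or_odd c with hc | hc
  · obtain ⟨t, rfl⟩ := hc
    rcases Int.even_or_odd t with ht | ht
    · obtain ⟨s, rfl⟩ := ht
      exact ⟨2 * s ^ 2, Or.inl (by ring)⟩
    · obtain ⟨s, rfl⟩ := ht
      exact ⟨2 * s ^ 2 + 2 * s, Or.inr (Or.inr (by ring))⟩
  · obtain ⟨k, hk⟩ := odd_sq hc
    exact ⟨k, Or.inr (Or.inl hk)⟩

private lemma coprime_two {a : ℤ} (h : Odd a) : IsCoprime a 2 := by
  obtain ⟨t, ht⟩ := h
  exact ⟨1, -t, by rw [ht]; ring⟩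

private lemma pow4_of_coprime {a b c : ℤ} (h : IsCoprime a b) (heq : a * b = c ^ 4)
    (ha : 0 < a) : ∃ d, a = d ^ 4 := by
  obtain ⟨d, hd⟩ := exists_associated_pow_of_mul_eq_pow' h heq
  rcases Int.associated_iff.mp hd with h1 | h1
  · exact ⟨d, h1.symm⟩
  · exfalso
    have h2 : 0 ≤ d ^ 4 := by positivity
    nlinarith

private lemma isCoprime_abs {a b : ℤ} (h : IsCoprime a b) : IsCoprime |a| |b| := by
  rcases abs_cases a with ⟨h1, _⟩ | ⟨h1, _⟩ <;> rcases abs_cases b with ⟨h2, _⟩ | ⟨h2, _⟩ <;>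
    rw [h1, h2]
  · exact h
  · exact h.neg_right
  · exact h.neg_left
  · exact h.neg_left.neg_right

private lemma lemA_aux : ∀ N : ℕ, ∀ a b c : ℤ, a.natAbs < N → 0 < a → 0 < b → 0 < c →
    a ^ 4 - b ^ 4 ≠ c ^ 2 := by
  intro N
  induction N with
  | zero => intro a b c h; omega
  | succ N ih =>
    intro a b c hN ha hb hc heq
    rcases Nat.lt_or_ge (Int.gcd a b) 2 with hg1 | hg2
    · -- coprime case
      have hgcd : Int.gcd a b = 1 := by
        have hane : a ≠ 0 := ne_of_gt ha
        have : Int.gcd a b ≠ 0 := by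
          simp only [ne_eq, Int.gcd_eq_zero_iff, not_and]
          intro h; exact absurd h hane
        omega
      have hab : IsCoprime a b := Int.isCoprime_iff_gcd_eq_one.mpr hgcd
      -- a is odd
      have haodd : Odd a := by
        rcases Int.even_or_odd a with haev | haod
        · exfalso
          have hbodd : Odd b := by
            rcases Int.even_or_odd b with hbev | h
            · exfalso
              obtain ⟨k1, hk1⟩ := haev
              obtain ⟨k2, hk2⟩ := hbev
              have hu : IsUnit (2 : ℤ) :=
                hab.isUnit_of_dvd' ⟨k1, by omega⟩ ⟨k2, by omega⟩
              rcases Int.isUnit_iff.mp hu with h | h <;> norm_num at h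
            · exact h
          obtain ⟨K, hK⟩ := even_pow4 haev
          obtain ⟨M, hM⟩ := odd_pow4 hbodd
          obtain ⟨J, hJ⟩ := sq_mod8 c
          rw [hK, hM] at heq
          rcases hJ with hJ | hJ | hJ <;> rw [hJ] at heq <;> omega
        · exact haod
      -- b and c coprime
      have hbc : IsCoprime b c := by
        have h1 : IsCoprime b (a ^ 4) := hab.symm.pow_right
        have h3 := h1.add_mul_left_right (-(b ^ 3))
        rw [show a ^ 4 + b * -(b ^ 3) = c ^ 2 by linear_combination heq] at h3
        exact h3.of_isCoprime_of_dvd_right (dvd_pow_self c two_ne_zero)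
      rcases Int.even_or_odd b with hbev | hbodd
      · -- b even, c odd
        obtain ⟨K, hK⟩ := odd_pow4 haodd
        obtain ⟨M, hM⟩ := even_pow4 hbev
        have hcodd : Odd c := by
          have h1 : Odd (c ^ 2) := ⟨8 * K - 8 * M, by omega⟩
          rcases Int.odd_pow.mp h1 with h | h
          · exact h
          · omega
        have ht : PythagoreanTriple c (b ^ 2) (a ^ 2) := by
          show c * c + b ^ 2 * b ^ 2 = a ^ 2 * (a ^ 2)
          linear_combination -heq
        have hcop : Int.gcd c (b ^ 2) = 1 :=
          Int.isCoprime_iff_gcd_eq_one.mp (hbc.pow_left.symm)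
        obtain ⟨m, n, h1, h2, h3, h4, h5, h6⟩ :=
          PythagoreanTriple.coprime_classification' ht hcop (Int.odd_iff.mp hcodd)
            (by positivity)
        have hb2 : (0 : ℤ) < b ^ 2 := by positivity
        have hmn_pos : 0 < m * n := by nlinarith
        have hmn' := mul_pos_iff.mp hmn_pos
        have hm_pos : 0 < m := by
          rcases hmn' with ⟨h, _⟩ | ⟨h, _⟩
          · exact h
          · linarith
        have hn_pos : 0 < n := by
          rcases hmn' with ⟨_, h⟩ | ⟨h, _⟩
          · exact h
          · linarith
        have hmncop : IsCoprime m n := Int.isCoprime_iff_gcd_eq_one.mpr h4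
        rcases h5 with ⟨hm2, hn2⟩ | ⟨hm2, hn2⟩
        · -- m even, n odd : use triple (n, m, a)
          have ht2 : PythagoreanTriple n m a := by
            show n * n + m * m = a * a
            linear_combination -h3
          have hcop2 : Int.gcd n m = 1 := by rw [Int.gcd_comm]; exact h4
          obtain ⟨p, q, g1, g2, g3, g4, _, g6⟩ :=
            PythagoreanTriple.coprime_classification' ht2 hcop2 hn2 ha
          -- b² = 2mn with n odd : n * (2m) = b²
          have hncop2m : IsCoprime n (2 * m) :=
            (coprime_two (Int.odd_iff.mpr hn2)).mul_right hmncop.symm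
          obtain ⟨r, hr⟩ := Int.sq_of_isCoprime hncop2m
            (show n * (2 * m) = b ^ 2 by linear_combination -h2)
          have hn_eq : n = r ^ 2 := by
            rcases hr with h | h
            · exact h
            · exfalso; linarith [sq_nonneg r]
          obtain ⟨s, hs⟩ := Int.sq_of_isCoprime hncop2m.symm
            (show (2 * m) * n = b ^ 2 by linear_combination -h2)
          have hs_eq : 2 * m = s ^ 2 := by
            rcases hs with h | h
            · exact h
            · exfalso; linarith [sq_nonneg s]
          have hs_even : Even s := by
            have h7 : Even (s ^ 2) := ⟨m, by linarith⟩
            exact (Int.even_pow.mp h7).1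
          obtain ⟨t, rfl⟩ := hs_even
          have hpq : p * q = t ^ 2 := by
            have h2m : 2 * m = 4 * t ^ 2 := by linear_combination hs_eq
            have hm' : m = 2 * t ^ 2 := by linarith
            rw [hm'] at g2
            linarith
          have htne : t ≠ 0 := by
            rintro rfl
            norm_num at hs_eq
            omega
          have ht2pos : (0:ℤ) < t ^ 2 := by
            have h0 := pow_pos (abs_pos.mpr htne) 2
            rwa [sq_abs] at h0
          have hpq_pos : 0 < p * q := by rw [hpq]; exact ht2pos
          have hpq' := mul_pos_iff.mp hpq_pos
          have hp_pos : 0 < p := by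
            rcases hpq' with ⟨h, _⟩ | ⟨h, _⟩
            · exact h
            · linarith
          have hq_pos : 0 < q := by
            rcases hpq' with ⟨_, h⟩ | ⟨h, _⟩
            · exact h
            · linarith
          have hpqcop : IsCoprime p q := Int.isCoprime_iff_gcd_eq_one.mpr g4
          obtain ⟨e, he⟩ := Int.sq_of_isCoprime hpqcop hpq
          have hp_eq : p = e ^ 2 := by
            rcases he with h | h
            · exact h
            · exfalso; linarith [sq_nonneg e]
          obtain ⟨f, hf⟩ := Int.sq_of_isCoprime hpqcop.symm
            (show q * p = t ^ 2 by linear_combination hpq)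
          have hq_eq : q = f ^ 2 := by
            rcases hf with h | h
            · exact h
            · exfalso; linarith [sq_nonneg f]
          have hfinal : |e| ^ 4 - |f| ^ 4 = |r| ^ 2 := by
            rw [abs_pow4, abs_pow4, sq_abs]
            linear_combination (-(p + e ^ 2)) * hp_eq + (q + f ^ 2) * hq_eq - g1 + hn_eq
          have he0 : e ≠ 0 := by rintro rfl; simp at hp_eq; omega
          have hf0 : f ≠ 0 := by rintro rfl; simp at hq_eq; omega
          have hr0 : r ≠ 0 := by rintro rfl; simp at hn_eq; omega
          have hlt : |e|.natAbs < a.natAbs := by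
            apply natAbs_lt_of_sq_lt
            have h9 : (0:ℤ) ≤ |e| := abs_nonneg e
            have habs : |e| ≤ e ^ 2 := by
              rcases eq_or_ne e 0 with rfl | h
              · simp
              · have h1 : 1 ≤ |e| := Int.one_le_abs h
                calc |e| = 1 * |e| := (one_mul _).symm
                  _ ≤ |e| * |e| := mul_le_mul_of_nonneg_right h1 (abs_nonneg e)
                  _ = e ^ 2 := by rw [abs_mul_abs_self]; ring
            have h7 : p ≤ p ^ 2 := le_self_pow₀ (by omega) two_ne_zero
            have h8 : |e| < a := by linarith [pow_pos hq_pos 2]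
            calc |e| ^ 2 = |e| * |e| := by ring
              _ < a * a := mul_lt_mul'' h8 h8 h9 h9
              _ = a ^ 2 := by ring
          exact ih |e| |f| |r| (by omega) (abs_pos.mpr he0) (abs_pos.mpr hf0)
            (abs_pos.mpr hr0) hfinal
        · -- m odd, n even : use triple (m, n, a)
          have ht2 : PythagoreanTriple m n a := by
            show m * m + n * n = a * a
            linear_combination -h3
          obtain ⟨p, q, g1, g2, g3, g4, _, g6⟩ :=
            PythagoreanTriple.coprime_classification' ht2 h4 hm2 ha
          have hmcop2n : IsCoprime m (2 * n) :=
            (coprime_two (Int.odd_iff.mpr hm2)).mul_right hmncop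
          obtain ⟨r, hr⟩ := Int.sq_of_isCoprime hmcop2n
            (show m * (2 * n) = b ^ 2 by linear_combination -h2)
          have hm_eq : m = r ^ 2 := by
            rcases hr with h | h
            · exact h
            · exfalso; linarith [sq_nonneg r]
          obtain ⟨s, hs⟩ := Int.sq_of_isCoprime hmcop2n.symm
            (show (2 * n) * m = b ^ 2 by linear_combination -h2)
          have hs_eq : 2 * n = s ^ 2 := by
            rcases hs with h | h
            · exact h
            · exfalso; linarith [sq_nonneg s]
          have hs_even : Even s := by
            have h7 : Even (s ^ 2) := ⟨n, by linarith⟩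
            exact (Int.even_pow.mp h7).1
          obtain ⟨t, rfl⟩ := hs_even
          have hpq : p * q = t ^ 2 := by
            have h2n : 2 * n = 4 * t ^ 2 := by linear_combination hs_eq
            have hn' : n = 2 * t ^ 2 := by linarith
            rw [hn'] at g2
            linarith
          have htne : t ≠ 0 := by
            rintro rfl
            norm_num at hs_eq
            omega
          have ht2pos : (0:ℤ) < t ^ 2 := by
            have h0 := pow_pos (abs_pos.mpr htne) 2
            rwa [sq_abs] at h0
          have hpq_pos : 0 < p * q := by rw [hpq]; exact ht2pos
          have hpq' := mul_pos_iff.mp hpq_pos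
          have hp_pos : 0 < p := by
            rcases hpq' with ⟨h, _⟩ | ⟨h, _⟩
            · exact h
            · linarith
          have hq_pos : 0 < q := by
            rcases hpq' with ⟨_, h⟩ | ⟨h, _⟩
            · exact h
            · linarith
          have hpqcop : IsCoprime p q := Int.isCoprime_iff_gcd_eq_one.mpr g4
          obtain ⟨e, he⟩ := Int.sq_of_isCoprime hpqcop hpq
          have hp_eq : p = e ^ 2 := by
            rcases he with h | h
            · exact h
            · exfalso; linarith [sq_nonneg e]
          obtain ⟨f, hf⟩ := Int.sq_of_isCoprime hpqcop.symm
            (show q * p = t ^ 2 by linear_combination hpq)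
          have hq_eq : q = f ^ 2 := by
            rcases hf with h | h
            · exact h
            · exfalso; linarith [sq_nonneg f]
          have hfinal : |e| ^ 4 - |f| ^ 4 = |r| ^ 2 := by
            rw [abs_pow4, abs_pow4, sq_abs]
            linear_combination (-(p + e ^ 2)) * hp_eq + (q + f ^ 2) * hq_eq - g1 + hm_eq
          have he0 : e ≠ 0 := by rintro rfl; simp at hp_eq; omega
          have hf0 : f ≠ 0 := by rintro rfl; simp at hq_eq; omega
          have hr0 : r ≠ 0 := by rintro rfl; simp at hm_eq; omega
          have hlt : |e|.natAbs < a.natAbs := by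
            apply natAbs_lt_of_sq_lt
            have h9 : (0:ℤ) ≤ |e| := abs_nonneg e
            have habs : |e| ≤ e ^ 2 := by
              rcases eq_or_ne e 0 with rfl | h
              · simp
              · have h1 : 1 ≤ |e| := Int.one_le_abs h
                calc |e| = 1 * |e| := (one_mul _).symm
                  _ ≤ |e| * |e| := mul_le_mul_of_nonneg_right h1 (abs_nonneg e)
                  _ = e ^ 2 := by rw [abs_mul_abs_self]; ring
            have h7 : p ≤ p ^ 2 := le_self_pow₀ (by omega) two_ne_zero
            have h8 : |e| < a := by linarith [pow_pos hq_pos 2]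
            calc |e| ^ 2 = |e| * |e| := by ring
              _ < a * a := mul_lt_mul'' h8 h8 h9 h9
              _ = a ^ 2 := by ring
          exact ih |e| |f| |r| (by omega) (abs_pos.mpr he0) (abs_pos.mpr hf0)
            (abs_pos.mpr hr0) hfinal
      · -- b odd
        have ht : PythagoreanTriple (b ^ 2) c (a ^ 2) := by
          show b ^ 2 * b ^ 2 + c * c = a ^ 2 * (a ^ 2)
          linear_combination -heq
        have hcop : Int.gcd (b ^ 2) c = 1 :=
          Int.isCoprime_iff_gcd_eq_one.mp hbc.pow_left
        have hparity : b ^ 2 % 2 = 1 := Int.odd_iff.mp hbodd.pow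
        obtain ⟨m, n, h1, h2, h3, h4, _, h6⟩ :=
          PythagoreanTriple.coprime_classification' ht hcop hparity (by positivity)
        have hn0 : n ≠ 0 := by
          rintro rfl
          rw [mul_zero] at h2
          omega
        have hm0 : m ≠ 0 := by
          rintro rfl
          norm_num at h2
          omega
        have hmn : m ^ 4 - |n| ^ 4 = (a * b) ^ 2 := by
          rw [abs_pow4]
          linear_combination (-(m ^ 2 + n ^ 2)) * h1 + (-(b ^ 2)) * h3
        have hm_pos : 0 < m := h6.lt_of_ne (Ne.symm hm0)
        have hn2 : (0:ℤ) < n ^ 2 := by positivity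
        have hlt : m.natAbs < a.natAbs := natAbs_lt_of_sq_lt (by linarith)
        exact ih m |n| (a * b) (by omega) hm_pos (abs_pos.mpr hn0) (mul_pos ha hb) hmn
    · -- common factor descent
      have hgz : (0 : ℤ) < (Int.gcd a b : ℤ) := by exact_mod_cast Nat.lt_of_lt_of_le Nat.zero_lt_two hg2
      obtain ⟨a', ha'⟩ : ((Int.gcd a b : ℤ)) ∣ a := Int.gcd_dvd_left _ _
      obtain ⟨b', hb'⟩ : ((Int.gcd a b : ℤ)) ∣ b := Int.gcd_dvd_right _ _
      set g : ℤ := (Int.gcd a b : ℤ) with hgdef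
      have hgne : g ≠ 0 := ne_of_gt hgz
      rw [ha', hb'] at heq
      have hc2 : (g ^ 2) ^ 2 ∣ c ^ 2 := ⟨a' ^ 4 - b' ^ 4, by linear_combination -heq⟩
      have hgc : g ^ 2 ∣ c := (Int.pow_dvd_pow_iff two_ne_zero).mp hc2
      obtain ⟨c', hc'⟩ := hgc
      rw [hc'] at heq
      have heq' : a' ^ 4 - b' ^ 4 = c' ^ 2 := by
        have h9 : g ^ 4 * (a' ^ 4 - b' ^ 4) = g ^ 4 * c' ^ 2 := by linear_combination heq
        exact mul_left_cancel₀ (pow_ne_zero 4 hgne) h9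
      have ha'pos : 0 < a' := by
        by_contra h
        push_neg at h
        have h0 := mul_nonpos_of_nonneg_of_nonpos hgz.le h
        rw [← ha'] at h0
        linarith
      have hb'pos : 0 < b' := by
        by_contra h
        push_neg at h
        have h0 := mul_nonpos_of_nonneg_of_nonpos (by positivity : (0:ℤ) ≤ g) h
        rw [← hb'] at h0
        linarith
      have hc'pos : 0 < c' := by
        by_contra h
        push_neg at h
        have h0 := mul_nonpos_of_nonneg_of_nonpos (by positivity : (0:ℤ) ≤ g ^ 2) h
        rw [← hc'] at h0
        linarith
      have hgnat : g.natAbs = Int.gcd a b := by rw [hgdef]; exact Int.natAbs_natCast _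
      have hmeas : a.natAbs = g.natAbs * a'.natAbs := by rw [ha', Int.natAbs_mul]
      have ha'ne : a'.natAbs ≠ 0 := by
        simp only [ne_eq, Int.natAbs_eq_zero]
        exact ne_of_gt ha'pos
      have h2a : 2 * a'.natAbs ≤ g.natAbs * a'.natAbs := by
        apply Nat.mul_le_mul_right
        omega
      exact ih a' b' c' (by omega) ha'pos hb'pos hc'pos heq'

lemma no_pow4_sub_pow4_eq_sq (a b c : ℤ) (hb : b ≠ 0) (hc : c ≠ 0) : a ^ 4 - b ^ 4 ≠ c ^ 2 := by
  intro heq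
  have ha : a ≠ 0 := by
    rintro rfl
    have h1 : (0 : ℤ) < b ^ 4 := by positivity
    nlinarith [sq_nonneg c]
  have hfin : |a| ^ 4 - |b| ^ 4 = |c| ^ 2 := by
    rw [abs_pow4, abs_pow4, sq_abs]; exact heq
  exact lemA_aux (a.natAbs + 1) |a| |b| |c| (by rw [Int.natAbs_abs]; exact Nat.lt_succ_self _) (abs_pos.mpr ha) (abs_pos.mpr hb)
    (abs_pos.mpr hc) hfin

private lemma abs_eq_abs_of_pow4 {x y : ℤ} (h : x ^ 4 = y ^ 4) : |x| = |y| := by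
  rcases lt_trichotomy |x| |y| with hlt | heqq | hlt
  · exfalso
    have := pow_lt_pow_left₀ hlt (abs_nonneg x) (n := 4) (by norm_num)
    rw [abs_pow4, abs_pow4] at this
    omega
  · exact heqq
  · exfalso
    have := pow_lt_pow_left₀ hlt (abs_nonneg y) (n := 4) (by norm_num)
    rw [abs_pow4, abs_pow4] at this
    omega

private lemma unit_abs_one {U : ℤ} (h : IsUnit U) : |U| = 1 := by
  rcases Int.isUnit_iff.mp h with rfl | rfl <;> norm_num

private lemma part1 (r : ℕ) (U V W : ℤ) (hU : U ≠ 0) (hV : V ≠ 0) (hW : W ≠ 0)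
    (hUV : IsCoprime U V) (hUW : IsCoprime U W) (_hVW : IsCoprime V W)
    (heq : U ^ 4 - 2 ^ r * V ^ 4 + W ^ 4 = 0) :
    r = 1 ∧ |U| = 1 ∧ |V| = 1 ∧ |W| = 1 := by
  -- r ≠ 0
  rcases Nat.eq_zero_or_pos r with rfl | hrpos
  · exfalso
    exact not_fermat_42 hU hW (c := V ^ 2) (by linear_combination heq)
  -- U and W are odd
  have hodd : Odd U ∧ Odd W := by
    obtain ⟨D, hD⟩ : ∃ D, (2:ℤ) ^ r * V ^ 4 = 2 * D := by
      refine ⟨2 ^ (r - 1) * V ^ 4, ?_⟩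
      rw [← mul_assoc, ← pow_succ']
      congr 2
      omega
    rcases Int.even_or_odd U with hU2 | hU2 <;> rcases Int.even_or_odd W with hW2 | hW2
    · exfalso
      obtain ⟨k1, hk1⟩ := hU2
      obtain ⟨k2, hk2⟩ := hW2
      have hu : IsUnit (2 : ℤ) := hUW.isUnit_of_dvd' ⟨k1, by omega⟩ ⟨k2, by omega⟩
      rcases Int.isUnit_iff.mp hu with h | h <;> norm_num at h
    · exfalso
      obtain ⟨K, hK⟩ := even_pow4 hU2
      obtain ⟨M, hM⟩ := odd_pow4 hW2
      rw [hK, hM, hD] at heq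
      omega
    · exfalso
      obtain ⟨K, hK⟩ := odd_pow4 hU2
      obtain ⟨M, hM⟩ := even_pow4 hW2
      rw [hK, hM, hD] at heq
      omega
    · exact ⟨hU2, hW2⟩
  obtain ⟨hUo, hWo⟩ := hodd
  obtain ⟨K, hK⟩ := odd_pow4 hUo
  obtain ⟨M, hM⟩ := odd_pow4 hWo
  -- r = 1
  have hr1 : r = 1 := by
    by_contra hne
    have hr2 : 2 ≤ r := by omega
    obtain ⟨D, hD⟩ : ∃ D, (2:ℤ) ^ r * V ^ 4 = 4 * D := by
      refine ⟨2 ^ (r - 2) * V ^ 4, ?_⟩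
      rw [← mul_assoc]
      congr 1
      rw [show r = 2 + (r - 2) by omega, pow_add]
      norm_num
    rw [hK, hM, hD] at heq
    omega
  subst hr1
  -- U⁴ + W⁴ = 2 V⁴
  have heq1 : U ^ 4 + W ^ 4 = 2 * V ^ 4 := by linear_combination heq
  obtain ⟨d, hd⟩ : ∃ d, U ^ 4 - W ^ 4 = 2 * d := ⟨8 * K - 8 * M, by omega⟩
  have hV4 : V ^ 4 = U ^ 4 - d := by linarith
  have hW4 : W ^ 4 = U ^ 4 - 2 * d := by linarith
  have hd2 : (V ^ 2) ^ 4 - (U * W) ^ 4 = d ^ 2 := by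
    linear_combination (V ^ 4 + U ^ 4 - d) * hV4 + (-(U ^ 4)) * hW4
  have hd0 : d = 0 := by
    by_contra hd0
    exact no_pow4_sub_pow4_eq_sq (V ^ 2) (U * W) d (mul_ne_zero hU hW) hd0 hd2
  subst hd0
  have hUW4 : U ^ 4 = W ^ 4 := by linarith
  have hUV4 : U ^ 4 = V ^ 4 := by linarith
  have habsUW : |U| = |W| := abs_eq_abs_of_pow4 hUW4
  have habsUV : |U| = |V| := abs_eq_abs_of_pow4 hUV4
  have hdvd : U ∣ W := by
    rcases abs_eq_abs.mp habsUW with h | h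
    · exact ⟨1, by omega⟩
    · exact ⟨-1, by omega⟩
  have hunit : IsUnit U := hUW.isUnit_of_dvd' dvd_rfl hdvd
  have hU1 : |U| = 1 := unit_abs_one hunit
  exact ⟨rfl, hU1, by omega, by omega⟩

private lemma part2 : ¬ ∃ (r : ℕ) (U V W : ℤ), U ≠ 0 ∧ V ≠ 0 ∧ W ≠ 0 ∧
    IsCoprime U V ∧ IsCoprime U W ∧ IsCoprime V W ∧
    2 ^ r * U ^ 4 - V ^ 4 + W ^ 4 = 0 := by
  rintro ⟨r, U, V, W, hU, hV, hW, _hUV, _hUW, hVW, heq⟩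
  -- extract the odd part of U
  obtain ⟨s, m, hm, habs⟩ := Nat.exists_eq_two_pow_mul_odd (Int.natAbs_ne_zero.mpr hU)
  obtain ⟨j0, hj0⟩ := hm
  have hu_odd : Odd ((m : ℤ)) := ⟨(j0 : ℤ), by exact_mod_cast hj0⟩
  have hu_pos : (0 : ℤ) < (m : ℤ) := by exact_mod_cast (by omega : 0 < m)
  set u : ℤ := (m : ℤ) with hudef
  have hU_eq : |U| = 2 ^ s * u := by
    rw [Int.abs_eq_natAbs, habs]
    push_cast
    rfl
  have h1 : ((2 : ℤ) ^ s) ^ 4 = 2 ^ (4 * s) := by rw [← pow_mul, Nat.mul_comm]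
  have hU4 : U ^ 4 = 2 ^ (4 * s) * u ^ 4 := by
    rw [← abs_pow4 U, hU_eq, mul_pow, h1]
  obtain ⟨t, hmain⟩ : ∃ t : ℕ, V ^ 4 - W ^ 4 = 2 ^ t * u ^ 4 := by
    refine ⟨r + 4 * s, ?_⟩
    rw [pow_add]
    linear_combination -heq + (2 : ℤ) ^ r * hU4
  clear heq hU4 h1 hU_eq habs hj0
  have hu_ne : u ≠ 0 := ne_of_gt hu_pos
  rcases Nat.even_or_odd t with ⟨h, hh⟩ | hodd
  · -- t even : V⁴ - W⁴ is a perfect square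
    refine no_pow4_sub_pow4_eq_sq V W (2 ^ h * u ^ 2) hW ?_ ?_
    · exact mul_ne_zero (pow_ne_zero _ two_ne_zero) (pow_ne_zero _ hu_ne)
    · rw [hmain, hh, pow_add]; ring
  · -- t odd
    obtain ⟨j, hj⟩ := hodd
    -- V and W are both odd
    have hVWodd : Odd V ∧ Odd W := by
      obtain ⟨D, hD⟩ : ∃ D, (2 : ℤ) ^ t * u ^ 4 = 2 * D := by
        refine ⟨2 ^ (t - 1) * u ^ 4, ?_⟩
        rw [← mul_assoc, ← pow_succ']
        congr 2
        omega
      rcases Int.even_or_odd V with hV2 | hV2 <;> rcases Int.even_or_odd W with hW2 | hW2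
      · exfalso
        obtain ⟨k1, hk1⟩ := hV2
        obtain ⟨k2, hk2⟩ := hW2
        have hun : IsUnit (2 : ℤ) := hVW.isUnit_of_dvd' ⟨k1, by omega⟩ ⟨k2, by omega⟩
        rcases Int.isUnit_iff.mp hun with h | h <;> norm_num at h
      · exfalso
        obtain ⟨K, hK⟩ := even_pow4 hV2
        obtain ⟨M, hM⟩ := odd_pow4 hW2
        rw [hK, hM, hD] at hmain
        omega
      · exfalso
        obtain ⟨K, hK⟩ := odd_pow4 hV2
        obtain ⟨M, hM⟩ := even_pow4 hW2
        rw [hK, hM, hD] at hmain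
        omega
      · exact ⟨hV2, hW2⟩
    obtain ⟨hVo, hWo⟩ := hVWodd
    obtain ⟨K, hK⟩ := odd_pow4 hVo
    obtain ⟨M, hM⟩ := odd_pow4 hWo
    obtain ⟨L, hL⟩ := odd_pow4 hu_odd
    -- t ≥ 5
    have ht5 : 5 ≤ t := by
      by_contra hlt
      have h13 : t = 1 ∨ t = 3 := by omega
      rcases h13 with rfl | rfl <;> rw [hK, hM, hL] at hmain <;> norm_num at hmain <;> omega
    -- positivity normalization
    obtain ⟨A, B, hApos, hBpos, hAodd, hBodd, hABcop, hBA, hmainAB⟩ :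
        ∃ A B : ℤ, 0 < A ∧ 0 < B ∧ Odd A ∧ Odd B ∧ IsCoprime A B ∧ B < A ∧
          A ^ 4 - B ^ 4 = 2 ^ t * u ^ 4 := by
      have hAo : Odd |V| := by
        rcases abs_cases V with ⟨h, _⟩ | ⟨h, _⟩ <;> rw [h]
        · exact hVo
        · exact hVo.neg
      have hBo : Odd |W| := by
        rcases abs_cases W with ⟨h, _⟩ | ⟨h, _⟩ <;> rw [h]
        · exact hWo
        · exact hWo.neg
      have hmain' : |V| ^ 4 - |W| ^ 4 = 2 ^ t * u ^ 4 := by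
        rw [abs_pow4, abs_pow4]; exact hmain
      have hrhs : (0 : ℤ) < 2 ^ t * u ^ 4 :=
        mul_pos (pow_pos two_pos t) (by positivity)
      have hBA : |W| < |V| := by
        by_contra hle
        push_neg at hle
        have h4 : |V| ^ 4 ≤ |W| ^ 4 := pow_le_pow_left₀ (abs_nonneg V) hle 4
        linarith
      exact ⟨|V|, |W|, abs_pos.mpr hV, abs_pos.mpr hW, hAo, hBo, isCoprime_abs hVW,
        hBA, hmain'⟩
    clear hmain hK hM hVo hWo
    obtain ⟨α, hα⟩ := odd_sq hAodd
    obtain ⟨β, hβ⟩ := odd_sq hBodd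
    obtain ⟨P, hP2, hPodd⟩ : ∃ P, A ^ 2 + B ^ 2 = 2 * P ∧ Odd P :=
      ⟨4 * α + 4 * β + 1, by linarith, ⟨2 * (α + β), by ring⟩⟩
    obtain ⟨Q, hQ2⟩ : ∃ Q, A ^ 2 - B ^ 2 = 2 * Q := ⟨4 * α - 4 * β, by linarith⟩
    have hsplit : (2 : ℤ) ^ t = 4 * 2 ^ (t - 2) := by
      have h5 : t = 2 + (t - 2) := by omega
      calc (2 : ℤ) ^ t = 2 ^ (2 + (t - 2)) := by rw [← h5]
        _ = 4 * 2 ^ (t - 2) := by rw [pow_add]; norm_num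
    have hPQ : P * Q = 2 ^ (t - 2) * u ^ 4 := by
      have h4 : (4 : ℤ) * (P * Q) = 4 * (2 ^ (t - 2) * u ^ 4) := by
        linear_combination (-(A ^ 2 - B ^ 2)) * hP2 + (-(2 * P)) * hQ2 + hmainAB +
          u ^ 4 * hsplit
      exact mul_left_cancel₀ (by norm_num) h4
    have hPpos : 0 < P := by linarith [pow_pos hApos 2, pow_pos hBpos 2]
    have hQpos : 0 < Q := by
      have h6 := mul_lt_mul'' hBA hBA hBpos.le hBpos.le
      nlinarith
    have hPQcop : IsCoprime P Q := by
      obtain ⟨x, y, hxy⟩ := (hABcop.pow : IsCoprime (A ^ 2) (B ^ 2))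
      refine ⟨x + y, x - y, ?_⟩
      have h2 : 2 * ((x + y) * P + (x - y) * Q) = 2 * 1 := by
        linear_combination (-(x + y)) * hP2 + (-(x - y)) * hQ2 + 2 * hxy
      exact mul_left_cancel₀ two_ne_zero h2
    have hdvdQ : (2 : ℤ) ^ (t - 2) ∣ Q :=
      ((coprime_two hPodd).symm.pow_left).dvd_of_dvd_mul_left ⟨u ^ 4, hPQ⟩
    obtain ⟨Q₁, hQ₁⟩ := hdvdQ
    have hPQ₁ : P * Q₁ = u ^ 4 :=
      mul_left_cancel₀ (pow_ne_zero (t - 2) two_ne_zero)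
        (by linear_combination hPQ - P * hQ₁)
    have hQ₁pos : 0 < Q₁ := by
      by_contra hcon
      push_neg at hcon
      have h0 := mul_nonpos_of_nonneg_of_nonpos (by positivity : (0:ℤ) ≤ 2 ^ (t - 2)) hcon
      rw [← hQ₁] at h0
      linarith
    have hPQ₁cop : IsCoprime P Q₁ :=
      hPQcop.of_isCoprime_of_dvd_right ⟨2 ^ (t - 2), by rw [hQ₁]; ring⟩
    obtain ⟨a, ha4⟩ := pow4_of_coprime hPQ₁cop hPQ₁ hPpos
    obtain ⟨b, hb4⟩ := pow4_of_coprime hPQ₁cop.symm (by rw [mul_comm]; exact hPQ₁) hQ₁pos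
    -- p and q
    obtain ⟨i, hi⟩ := hAodd
    obtain ⟨j2, hj2⟩ := hBodd
    obtain ⟨p, hp⟩ : ∃ p, A + B = 2 * p := ⟨i + j2 + 1, by omega⟩
    obtain ⟨q, hq⟩ : ∃ q, A - B = 2 * q := ⟨i - j2, by omega⟩
    have hppos : 0 < p := by linarith
    have hqpos : 0 < q := by linarith
    have hpq_sum : p ^ 2 + q ^ 2 = a ^ 4 := by
      have h4 : (4 : ℤ) * (p ^ 2 + q ^ 2) = 4 * a ^ 4 := by
        linear_combination (-(A + B + 2 * p)) * hp + (-(A - B + 2 * q)) * hq + 2 * hP2 +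
          4 * ha4
      exact mul_left_cancel₀ (by norm_num) h4
    have h2pq : 2 * (p * q) = Q := by
      have h4 : (2 : ℤ) * (2 * (p * q)) = 2 * Q := by
        linear_combination (-(A - B)) * hp + (-(2 * p)) * hq + hQ2
      exact mul_left_cancel₀ two_ne_zero h4
    have hpq_prod : p * q = 2 ^ (t - 3) * b ^ 4 := by
      have hsplit2 : (2 : ℤ) ^ (t - 2) = 2 * 2 ^ (t - 3) := by
        have h5 : t - 2 = (t - 3) + 1 := by omega
        rw [h5, pow_succ']
      have h4 : (2 : ℤ) * (p * q) = 2 * (2 ^ (t - 3) * b ^ 4) := by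
        rw [h2pq, hQ₁, hb4, hsplit2]; ring
      exact mul_left_cancel₀ two_ne_zero h4
    have hpqcop : IsCoprime p q := by
      obtain ⟨x, y, hxy⟩ := hABcop
      refine ⟨x + y, x - y, ?_⟩
      have h2 : 2 * ((x + y) * p + (x - y) * q) = 2 * 1 := by
        linear_combination (-(x + y)) * hp + (-(x - y)) * hq + 2 * hxy
      exact mul_left_cancel₀ two_ne_zero h2
    rcases Int.even_or_odd p with hpe | hpo
    · -- p even, q odd
      have hqodd : Odd q := by
        rcases Int.even_or_odd q with h | h
        · exfalso
          obtain ⟨k1, hk1⟩ := hpe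
          obtain ⟨k2, hk2⟩ := h
          omega
        · exact h
      have hqcop : IsCoprime q ((2 : ℤ) ^ (t - 3)) := (coprime_two hqodd).pow_right
      have hdvdp : (2 : ℤ) ^ (t - 3) ∣ p :=
        hqcop.symm.dvd_of_dvd_mul_left ⟨b ^ 4, by linear_combination hpq_prod⟩
      obtain ⟨p₁, hp₁⟩ := hdvdp
      have hqp₁ : q * p₁ = b ^ 4 :=
        mul_left_cancel₀ (pow_ne_zero (t - 3) two_ne_zero)
          (by linear_combination hpq_prod - q * hp₁)
      have hqp₁cop : IsCoprime q p₁ :=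
        hpqcop.symm.of_isCoprime_of_dvd_right ⟨2 ^ (t - 3), by rw [hp₁]; ring⟩
      obtain ⟨c, hc4⟩ := pow4_of_coprime hqp₁cop hqp₁ hqpos
      have hfinal : a ^ 4 - (c ^ 2) ^ 4 = p ^ 2 := by
        linear_combination -hpq_sum + (q + c ^ 4) * hc4
      have hc0 : c ≠ 0 := by
        rintro rfl
        norm_num at hc4
        omega
      exact no_pow4_sub_pow4_eq_sq a (c ^ 2) p (pow_ne_zero 2 hc0) (ne_of_gt hppos) hfinal
    · -- p odd
      have hpcop : IsCoprime p ((2 : ℤ) ^ (t - 3)) := (coprime_two hpo).pow_right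
      have hdvdq : (2 : ℤ) ^ (t - 3) ∣ q :=
        hpcop.symm.dvd_of_dvd_mul_left ⟨b ^ 4, hpq_prod⟩
      obtain ⟨q₁, hq₁'⟩ := hdvdq
      have hpq₁' : p * q₁ = b ^ 4 :=
        mul_left_cancel₀ (pow_ne_zero (t - 3) two_ne_zero)
          (by linear_combination hpq_prod - p * hq₁')
      have hcop' : IsCoprime p q₁ :=
        hpqcop.of_isCoprime_of_dvd_right ⟨2 ^ (t - 3), by rw [hq₁']; ring⟩
      obtain ⟨c, hc4⟩ := pow4_of_coprime hcop' hpq₁' hppos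
      have hfinal : a ^ 4 - (c ^ 2) ^ 4 = q ^ 2 := by
        linear_combination -hpq_sum + (p + c ^ 4) * hc4
      have hc0 : c ≠ 0 := by
        rintro rfl
        norm_num at hc4
        omega
      exact no_pow4_sub_pow4_eq_sq a (c ^ 2) q (pow_ne_zero 2 hc0) (ne_of_gt hqpos) hfinal

/-- If `r ≥ 0` and `U, V, W` are non-zero pairwise coprime integers with
`U⁴ - 2^r V⁴ + W⁴ = 0`, then `r = 1` and `|U| = |V| = |W| = 1`.  Moreover there are no non-zero
pairwise coprime integers `U, V, W` with `2^r U⁴ - V⁴ + W⁴ = 0`. -/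
theorem stmt_7 :
    (∀ (r : ℕ) (U V W : ℤ), U ≠ 0 → V ≠ 0 → W ≠ 0 →
      IsCoprime U V → IsCoprime U W → IsCoprime V W →
      U ^ 4 - 2 ^ r * V ^ 4 + W ^ 4 = 0 →
      r = 1 ∧ |U| = 1 ∧ |V| = 1 ∧ |W| = 1) ∧
    ¬ ∃ (r : ℕ) (U V W : ℤ), U ≠ 0 ∧ V ≠ 0 ∧ W ≠ 0 ∧
      IsCoprime U V ∧ IsCoprime U W ∧ IsCoprime V W ∧
      2 ^ r * U ^ 4 - V ^ 4 + W ^ 4 = 0 := by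
  exact ⟨fun r U V W hU hV hW hUV hUW hVW heq => part1 r U V W hU hV hW hUV hUW hVW heq, part2⟩
end
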